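/- Let q = p^e > 2 be a prime power, r ≥ 1 a divisor of 2e, λ ∈ F* with λ^{p^{tr}} = λ^q for some 0 ≤ t < 2e/r, and k = k_{r,λ}(q). A flag (⟨u₂⟩, L₂) ∈ V(q) is adjacent to (∞, L*) in Γ_{r,λ}(q) if and only if there exist an integer 0 ≤ i < k and a, b, c ∈ F* with b + b^q = a^{q+1} such that (i) u₂ is a scalar multiple of (ac, bc, c), and (ii) L₂ is the set of absolute points ⟨x,y,z⟩ satisfying (a^{q+1}c − λ^{q p^{ir}})x − acy + a(λ^{q p^{ir}} − b^q c)z = 0. -/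

import Mathlib

namespace UnitaryGraphPaper

variable (F : Type) [Field F]

/-- The Hermitian form β((x₁,y₁,z₁),(x₂,y₂,z₂)) = −x₁x₂^q + y₁z₂^q + z₁y₂^q. -/
def beta (q : ℕ) (u v : F × F × F) : F :=
  -(u.1 * v.1 ^ q) + u.2.1 * v.2.2 ^ q + u.2.2 * v.2.1 ^ q

/-- A vector is isotropic if β(u,u) = 0. -/
def Isotropic (q : ℕ) (u : F × F × F) : Prop := beta F q u u = 0

/-- Absolute points: 1-dimensional subspaces spanned by nonzero isotropic vectors. -/
def IsAbsolutePoint (q : ℕ) (P : Submodule F (F × F × F)) : Prop :=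
  ∃ u : F × F × F, u ≠ 0 ∧ Isotropic F q u ∧ P = Submodule.span F {u}

/-- Lines of the Hermitian unital: sets of absolute points contained in a 2-dimensional
subspace spanned by two linearly independent isotropic vectors. -/
def IsUnitalLine (q : ℕ) (l : Set (Submodule F (F × F × F))) : Prop :=
  ∃ u v : F × F × F, Isotropic F q u ∧ Isotropic F q v ∧ LinearIndependent F ![u, v] ∧
    l = {P | IsAbsolutePoint F q P ∧ P ≤ Submodule.span F ({u, v} : Set (F × F × F))}

/-- Flags of the Hermitian unital: incident point-line pairs. -/
def Flag (q : ℕ) : Type :=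
  {Pl : Submodule F (F × F × F) × Set (Submodule F (F × F × F)) //
    IsAbsolutePoint F q Pl.1 ∧ IsUnitalLine F q Pl.2 ∧ Pl.1 ∈ Pl.2}

/-- The set of absolute points ⟨x,y,z⟩ for which the determinant of the 3×3 matrix with
columns (x,y,z), u, w vanishes. -/
def detLine (q : ℕ) (u w : F × F × F) : Set (Submodule F (F × F × F)) :=
  {P | ∃ v : F × F × F, v ≠ 0 ∧ Isotropic F q v ∧ P = Submodule.span F {v} ∧
    (!![v.1, u.1, w.1; v.2.1, u.2.1, w.2.1; v.2.2, u.2.2, w.2.2] : Matrix (Fin 3) (Fin 3) F).det = 0}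

/-- The defining adjacency condition of the unitary graph Γ_{r,λ}(q), q = p^e. -/
def AdjCond (p q e r : ℕ) (lam : F) (v₁ v₂ : Flag F q) : Prop :=
  ∃ i : ℕ, i < 2 * e / r ∧ ∃ u₁ u₂ u₀ : F × F × F,
    u₁ ≠ 0 ∧ Isotropic F q u₁ ∧ v₁.1.1 = Submodule.span F {u₁} ∧
    u₂ ≠ 0 ∧ Isotropic F q u₂ ∧ v₂.1.1 = Submodule.span F {u₂} ∧
    ¬ Isotropic F q u₀ ∧ beta F q u₀ u₁ = 0 ∧ beta F q u₀ u₂ = 0 ∧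
    v₁.1.2 = detLine F q u₁ (u₀ + u₂) ∧
    v₂.1.2 = detLine F q u₂ (u₀ + lam ^ (q * p ^ (i * r)) • u₁)

/-- The unitary graph Γ_{r,λ}(q). -/
def unitaryGraph (p q e r : ℕ) (lam : F) : SimpleGraph (Flag F q) :=
  SimpleGraph.fromRel (AdjCond F p q e r lam)

/-- The absolute point ∞ = ⟨0,1,0⟩. -/
def ptInfty : Submodule F (F × F × F) := Submodule.span F {((0 : F), 1, 0)}

/-- The absolute point 0 = ⟨0,0,1⟩. -/
def ptZero : Submodule F (F × F × F) := Submodule.span F {((0 : F), 0, 1)}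

/-- The line L*: absolute points ⟨x,y,z⟩ with x = 0. -/
def lineLstar (q : ℕ) : Set (Submodule F (F × F × F)) :=
  {P | ∃ v : F × F × F, v ≠ 0 ∧ Isotropic F q v ∧ P = Submodule.span F {v} ∧ v.1 = 0}

/-- The line L: absolute points ⟨x,y,z⟩ with x = z. -/
def lineL (q : ℕ) : Set (Submodule F (F × F × F)) :=
  {P | ∃ v : F × F × F, v ≠ 0 ∧ Isotropic F q v ∧ P = Submodule.span F {v} ∧ v.1 = v.2.2}

/-- The line N(η): absolute points ⟨x,y,z⟩ with y = ηx. -/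
def lineN (q : ℕ) (eta : F) : Set (Submodule F (F × F × F)) :=
  {P | ∃ v : F × F × F, v ≠ 0 ∧ Isotropic F q v ∧ P = Submodule.span F {v} ∧ v.2.1 = eta * v.1}

/-- The line given by the homogenous equation A x + B y + C z = 0 (as a set of absolute
points). -/
def eqnLine (q : ℕ) (A B C : F) : Set (Submodule F (F × F × F)) :=
  {P | ∃ v : F × F × F, v ≠ 0 ∧ Isotropic F q v ∧ P = Submodule.span F {v} ∧
    A * v.1 + B * v.2.1 + C * v.2.2 = 0}

/-- Common neighbours of two vertices in a graph. -/
def commonNbrs {V : Type} (G : SimpleGraph V) (a b : V) : Set V :=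
  {c | G.Adj a c ∧ G.Adj b c}

/- ### Auxiliary lemmas -/

variable {F}

lemma exists_smul_of_span_eq {u v : F × F × F} (hv : v ≠ 0)
    (h : Submodule.span F {u} = Submodule.span F {v}) :
    ∃ t : F, t ≠ 0 ∧ v = t • u := by
  have hv' : v ∈ Submodule.span F {v} := Submodule.mem_span_singleton_self v
  rw [← h] at hv'
  obtain ⟨t, ht⟩ := Submodule.mem_span_singleton.mp hv'
  refine ⟨t, ?_, ht.symm⟩
  rintro rfl
  rw [zero_smul] at ht
  exact hv ht.symm

lemma span_singleton_smul {t : F} (ht : t ≠ 0) (u : F × F × F) :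
    Submodule.span F {t • u} = Submodule.span F {u} :=
  Submodule.span_singleton_smul_eq (IsUnit.mk0 t ht) u

lemma detLine_tuple (q : ℕ) (u1 u2 u3 w1 w2 w3 : F) :
    detLine F q (u1, u2, u3) (w1, w2, w3) =
      eqnLine F q (u2 * w3 - u3 * w2) (u3 * w1 - u1 * w3) (u1 * w2 - u2 * w1) := by
  ext P
  simp only [detLine, eqnLine, Set.mem_setOf_eq]
  constructor <;> rintro ⟨v, h1, h2, h3, h4⟩ <;> refine ⟨v, h1, h2, h3, ?_⟩
  · simp [Matrix.det_fin_three] at h4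
    linear_combination h4
  · simp [Matrix.det_fin_three]
    linear_combination h4

lemma eqnLine_congr (q : ℕ) {A B C A' B' C' : F} (hA : A = A') (hB : B = B') (hC : C = C') :
    eqnLine F q A B C = eqnLine F q A' B' C' := by rw [hA, hB, hC]

lemma eqnLine_prop (q : ℕ) {μ A B C A' B' C' : F} (hμ : μ ≠ 0)
    (hA : A' = μ * A) (hB : B' = μ * B) (hC : C' = μ * C) :
    eqnLine F q A' B' C' = eqnLine F q A B C := by
  ext P
  simp only [eqnLine, Set.mem_setOf_eq]
  constructor <;> rintro ⟨v, h1, h2, h3, h4⟩ <;> refine ⟨v, h1, h2, h3, ?_⟩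
  · have h5 : μ * (A * v.1 + B * v.2.1 + C * v.2.2) = 0 := by
      rw [hA, hB, hC] at h4; linear_combination h4
    rcases mul_eq_zero.mp h5 with h | h
    · exact absurd h hμ
    · exact h
  · rw [hA, hB, hC]; linear_combination μ * h4

lemma lineLstar_eq_eqnLine (q : ℕ) {c : F} (hc : c ≠ 0) :
    lineLstar F q = eqnLine F q c 0 0 := by
  ext P
  simp only [lineLstar, eqnLine, Set.mem_setOf_eq]
  constructor <;> rintro ⟨v, h1, h2, h3, h4⟩ <;> refine ⟨v, h1, h2, h3, ?_⟩
  · rw [h4]; ring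
  · have h5 : c * v.1 = 0 := by linear_combination h4
    rcases mul_eq_zero.mp h5 with h | h
    · exact absurd h hc
    · exact h

lemma first_coord_zero {q : ℕ} (hq0 : q ≠ 0) {s : F} (hs : s ≠ 0) {w : F × F × F}
    (h : lineLstar F q = detLine F q ((0 : F), s, 0) w) : w.1 = 0 := by
  have hmem : Submodule.span F {(((0:F), 0, 1) : F × F × F)} ∈ lineLstar F q := by
    refine ⟨((0:F), 0, 1), ?_, ?_, rfl, rfl⟩
    · simp [Prod.ext_iff]
    · simp [Isotropic, beta, zero_pow hq0]
  rw [h] at hmem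
  obtain ⟨v, hv0, hviso, hP, heq⟩ := hmem
  obtain ⟨t, ht, rfl⟩ := exists_smul_of_span_eq hv0 hP
  simp [Matrix.det_fin_three] at heq
  rcases heq with (h' | h') | h'
  · exact h'
  · exact absurd h' hs
  · exact absurd h' ht

lemma key (q : ℕ) (hq0 : q ≠ 0) (lamq κ τ α G D y₀ : F)
    (hκ : κ ≠ 0) (hτ : τ ≠ 0) (hlamq : lamq ≠ 0) (hα : α ≠ 0)
    (hβ : κ * (α * α ^ q) + y₀ * D ^ q = 0)
    (hiso : -(α * α ^ q) + G * D ^ q + D * G ^ q = 0) :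
    D ≠ 0 ∧ G ≠ 0 ∧ G / D + (G / D) ^ q = (α / D) ^ (q + 1) ∧
      eqnLine F q (-(D * (y₀ + τ))) (-(κ * α * D)) (α * (y₀ + τ + κ * G)) =
        eqnLine F q ((α / D) ^ (q + 1) * (κ * D * lamq / τ) - lamq)
          (-(α / D * (κ * D * lamq / τ)))
          (α / D * (lamq - (G / D) ^ q * (κ * D * lamq / τ))) := by
  have hαq : α * α ^ q ≠ 0 := mul_ne_zero hα (pow_ne_zero _ hα)
  have hD : D ≠ 0 := by
    rintro rfl
    rw [zero_pow hq0] at hiso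
    apply hαq
    linear_combination -hiso
  have hG : G ≠ 0 := by
    rintro rfl
    rw [zero_pow hq0] at hiso
    apply hαq
    linear_combination -hiso
  have hDq : D ^ q ≠ 0 := pow_ne_zero _ hD
  refine ⟨hD, hG, ?_, eqnLine_prop q (μ := D * τ / lamq)
    (div_ne_zero (mul_ne_zero hD hτ) hlamq) ?_ ?_ ?_⟩
  · rw [div_pow, div_pow]
    field_simp
    linear_combination (D * D ^ q) * hiso
  · rw [div_pow]
    field_simp
    linear_combination (-D) * hβ
  · field_simp
  · rw [div_pow]
    field_simp [hDq]
    linear_combination hβ + κ * hiso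

/-- The common core of the two directions of the forward implication. -/
lemma core {p q r : ℕ} (hq0 : q ≠ 0) {lam : F} (hlam : lam ≠ 0)
    {k : ℕ} (hk : 0 < k) (w : Flag F q)
    (κ τ av gv dv y₀ : F) (hκ : κ ≠ 0) (hτ : τ ≠ 0) (hav : av ≠ 0)
    (hβ : κ * (av * av ^ q) + y₀ * dv ^ q = 0)
    (hiso : -(av * av ^ q) + gv * dv ^ q + dv * gv ^ q = 0)
    (hw11 : w.1.1 = Submodule.span F {(av, gv, dv)})
    (hw12 : w.1.2 = eqnLine F q (-(dv * (y₀ + τ))) (-(κ * av * dv)) (av * (y₀ + τ + κ * gv))) :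
    ∃ i < k, ∃ a b c : F, a ≠ 0 ∧ b ≠ 0 ∧ c ≠ 0 ∧ b + b ^ q = a ^ (q + 1) ∧
      w.1.1 = Submodule.span F {(a * c, b * c, c)} ∧
      w.1.2 = eqnLine F q (a ^ (q + 1) * c - lam ^ (q * p ^ (i * r))) (-(a * c))
        (a * (lam ^ (q * p ^ (i * r)) - b ^ q * c)) := by
  set lamq := lam ^ (q * p ^ (0 * r)) with hlamqdef
  have hlamq : lamq ≠ 0 := pow_ne_zero _ hlam
  obtain ⟨hD, hG, hbb, heq⟩ := key q hq0 lamq κ τ av gv dv y₀ hκ hτ hlamq hav hβ hiso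
  have hcne : κ * dv * lamq / τ ≠ 0 :=
    div_ne_zero (mul_ne_zero (mul_ne_zero hκ hD) hlamq) hτ
  refine ⟨0, hk, av / dv, gv / dv, κ * dv * lamq / τ,
    div_ne_zero hav hD, div_ne_zero hG hD, hcne, hbb, ?_, ?_⟩
  · have htne : κ * lamq / τ ≠ 0 := div_ne_zero (mul_ne_zero hκ hlamq) hτ
    have h5 : ((av / dv * (κ * dv * lamq / τ), gv / dv * (κ * dv * lamq / τ),
        κ * dv * lamq / τ) : F × F × F) = (κ * lamq / τ) • ((av, gv, dv) : F × F × F) := by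
      simp only [Prod.smul_mk, smul_eq_mul, Prod.mk.injEq]
      refine ⟨by field_simp, by field_simp, by field_simp⟩
    rw [hw11, h5, span_singleton_smul htne]
  · rw [hw12, heq]


theorem stmt8 (F : Type) [Field F] [Fintype F] (p q e r : ℕ)
    (hp : p.Prime) (he : 0 < e) (hq : q = p ^ e) (hq2 : 2 < q)
    (hr : 0 < r) (hre : r ∣ 2 * e) (hF : Fintype.card F = q ^ 2)
    (lam : F) (hlam : lam ≠ 0)
    (hlamq : ∃ t : ℕ, t < 2 * e / r ∧ lam ^ p ^ (t * r) = lam ^ q)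
    (k : ℕ) (hk : 0 < k) (hkfix : lam ^ p ^ (k * r) = lam)
    (hkmin : ∀ j : ℕ, 0 < j → lam ^ p ^ (j * r) = lam → k ≤ j)
    (vL w : Flag F q) (hvL : vL.1 = (ptInfty F, lineLstar F q)) :
    (unitaryGraph F p q e r lam).Adj vL w ↔
      ∃ i < k, ∃ a b c : F, a ≠ 0 ∧ b ≠ 0 ∧ c ≠ 0 ∧ b + b ^ q = a ^ (q + 1) ∧
        w.1.1 = Submodule.span F {(a * c, b * c, c)} ∧
        w.1.2 = eqnLine F q (a ^ (q + 1) * c - lam ^ (q * p ^ (i * r))) (-(a * c))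
          (a * (lam ^ (q * p ^ (i * r)) - b ^ q * c)) := by
  have hq0 : q ≠ 0 := by omega
  simp only [unitaryGraph, SimpleGraph.fromRel_adj]
  constructor
  · rintro ⟨hne, hc | hc⟩
    · -- AdjCond vL w
      obtain ⟨j, hj, u₁, u₂, u₀, hu₁0, hu₁iso, hvL11, hu₂0, hu₂iso, hw11, hu₀, ho1, ho2,
        hvL12, hw12⟩ := hc
      have hvL11' : Submodule.span F {(((0:F), 1, 0) : F × F × F)} = Submodule.span F {u₁} := by
        rw [hvL] at hvL11; exact hvL11
      obtain ⟨s, hs, hu₁eq⟩ := exists_smul_of_span_eq hu₁0 hvL11'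
      have hu₁' : u₁ = ((0:F), s, 0) := by
        rw [hu₁eq]; simp [Prod.smul_mk]
      subst hu₁'
      obtain ⟨x₀, y₀, z₀⟩ := u₀
      obtain ⟨av, gv, dv⟩ := u₂
      simp only [beta] at ho1 ho2
      have hz : z₀ = 0 := by
        rw [zero_pow hq0] at ho1
        simp only [mul_zero, neg_zero, zero_add] at ho1
        rcases mul_eq_zero.mp ho1 with h' | h'
        · exact h'
        · exact absurd h' (pow_ne_zero _ hs)
      subst hz
      have hx₀ : x₀ ≠ 0 := by
        rintro rfl
        exact hu₀ (by simp [Isotropic, beta, zero_pow hq0])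
      simp only [Prod.mk_add_mk] at hvL12
      have h10 : lineLstar F q = detLine F q ((0:F), s, 0) ((x₀ + av), (y₀ + gv), (0 + dv)) := by
        rw [hvL] at hvL12; exact hvL12
      have hxa : x₀ + av = 0 := first_coord_zero hq0 hs h10
      have hx : x₀ = -av := eq_neg_of_add_eq_zero_left hxa
      subst hx
      have hav : av ≠ 0 := fun h => hx₀ (by rw [h, neg_zero])
      have hβ : (1:F) * (av * av ^ q) + y₀ * dv ^ q = 0 := by linear_combination ho2
      simp only [Isotropic, beta] at hu₂iso
      simp only [Prod.smul_mk, smul_eq_mul, Prod.mk_add_mk] at hw12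
      rw [detLine_tuple] at hw12
      rw [eqnLine_congr q
        (show gv * (0 + lam ^ (q * p ^ (j * r)) * 0) - dv * (y₀ + lam ^ (q * p ^ (j * r)) * s)
          = -(dv * (y₀ + lam ^ (q * p ^ (j * r)) * s)) by ring)
        (show dv * (-av + lam ^ (q * p ^ (j * r)) * 0) - av * (0 + lam ^ (q * p ^ (j * r)) * 0)
          = -((1:F) * av * dv) by ring)
        (show av * (y₀ + lam ^ (q * p ^ (j * r)) * s) - gv * (-av + lam ^ (q * p ^ (j * r)) * 0)
          = av * (y₀ + lam ^ (q * p ^ (j * r)) * s + 1 * gv) by ring)] at hw12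
      exact core hq0 hlam hk w 1 (lam ^ (q * p ^ (j * r)) * s) av gv dv y₀ one_ne_zero
        (mul_ne_zero (pow_ne_zero _ hlam) hs) hav hβ hu₂iso hw11 hw12
    · -- AdjCond w vL
      obtain ⟨j, hj, u₁, u₂, u₀, hu₁0, hu₁iso, hw11, hu₂0, hu₂iso, hvL11, hu₀, ho1, ho2,
        hw12, hvL12⟩ := hc
      have hvL11' : Submodule.span F {(((0:F), 1, 0) : F × F × F)} = Submodule.span F {u₂} := by
        rw [hvL] at hvL11; exact hvL11
      obtain ⟨s, hs, hu₂eq⟩ := exists_smul_of_span_eq hu₂0 hvL11'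
      have hu₂' : u₂ = ((0:F), s, 0) := by
        rw [hu₂eq]; simp [Prod.smul_mk]
      subst hu₂'
      obtain ⟨x₀, y₀, z₀⟩ := u₀
      obtain ⟨a1, gv, dv⟩ := u₁
      simp only [beta] at ho1 ho2
      have hz : z₀ = 0 := by
        rw [zero_pow hq0] at ho2
        simp only [mul_zero, neg_zero, zero_add] at ho2
        rcases mul_eq_zero.mp ho2 with h' | h'
        · exact h'
        · exact absurd h' (pow_ne_zero _ hs)
      subst hz
      have hx₀ : x₀ ≠ 0 := by
        rintro rfl
        exact hu₀ (by simp [Isotropic, beta, zero_pow hq0])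
      simp only [Prod.smul_mk, smul_eq_mul, Prod.mk_add_mk] at hvL12
      have h10 : lineLstar F q = detLine F q ((0:F), s, 0)
          ((x₀ + lam ^ (q * p ^ (j * r)) * a1), (y₀ + lam ^ (q * p ^ (j * r)) * gv),
            (0 + lam ^ (q * p ^ (j * r)) * dv)) := by
        rw [hvL] at hvL12; exact hvL12
      have hxa : x₀ + lam ^ (q * p ^ (j * r)) * a1 = 0 := first_coord_zero hq0 hs h10
      have hx : x₀ = -(lam ^ (q * p ^ (j * r)) * a1) := eq_neg_of_add_eq_zero_left hxa
      subst hx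
      have ha1 : a1 ≠ 0 := by
        rintro rfl
        exact hx₀ (by ring)
      have hβ : lam ^ (q * p ^ (j * r)) * (a1 * a1 ^ q) + y₀ * dv ^ q = 0 := by
        linear_combination ho1
      simp only [Isotropic, beta] at hu₁iso
      simp only [Prod.mk_add_mk] at hw12
      rw [detLine_tuple] at hw12
      rw [eqnLine_congr q
        (show gv * (0 + 0) - dv * (y₀ + s) = -(dv * (y₀ + s)) by ring)
        (show dv * (-(lam ^ (q * p ^ (j * r)) * a1) + 0) - a1 * (0 + 0)
          = -(lam ^ (q * p ^ (j * r)) * a1 * dv) by ring)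
        (show a1 * (y₀ + s) - gv * (-(lam ^ (q * p ^ (j * r)) * a1) + 0)
          = a1 * (y₀ + s + lam ^ (q * p ^ (j * r)) * gv) by ring)] at hw12
      exact core hq0 hlam hk w (lam ^ (q * p ^ (j * r))) s a1 gv dv y₀
        (pow_ne_zero _ hlam) hs ha1 hβ hu₁iso hw11 hw12
  · rintro ⟨i, hik, a, b, c, ha, hb, hc, hbb, hw11, hw12⟩
    have hkle : k ≤ 2 * e / r := by
      apply hkmin
      · exact Nat.div_pos (Nat.le_of_dvd (by omega) hre) hr
      · have h2e : (2 * e / r) * r = 2 * e := Nat.div_mul_cancel hre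
        rw [h2e]
        have hpq : p ^ (2 * e) = q ^ 2 := by rw [hq, ← pow_mul, mul_comm]
        rw [hpq, ← hF, FiniteField.pow_card]
    constructor
    · -- vL ≠ w
      intro hEq
      have h1 : Submodule.span F {((a * c, b * c, c) : F × F × F)}
          = Submodule.span F {(((0:F), 1, 0) : F × F × F)} := by
        rw [← hw11, ← hEq, hvL]; rfl
      obtain ⟨t, ht, hteq⟩ := exists_smul_of_span_eq (v := (((0:F), 1, 0) : F × F × F))
        (by simp [Prod.ext_iff]) h1
      have h3 := congrArg (fun v : F × F × F => v.2.2) hteq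
      simp only [Prod.smul_mk, smul_eq_mul] at h3
      exact hc (by rcases mul_eq_zero.mp h3.symm with h' | h'
                   · exact absurd h' ht
                   · exact h')
    · left
      refine ⟨i, lt_of_lt_of_le hik hkle, ((0:F), 1, 0), (a * c, b * c, c),
        (-(a * c), -(a ^ (q + 1) * c), 0), ?_, ?_, ?_, ?_, ?_, hw11, ?_, ?_, ?_, ?_, ?_⟩
      · simp [Prod.ext_iff]
      · simp [Isotropic, beta, zero_pow hq0]
      · rw [hvL]; rfl
      · intro h
        exact hc (congrArg (fun v : F × F × F => v.2.2) h)
      · show beta F q _ _ = 0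
        simp only [beta]
        linear_combination (c * c ^ q) * hbb
      · intro hI
        simp only [Isotropic, beta, zero_pow hq0, mul_zero, zero_mul, add_zero] at hI
        have h2 : (-(a * c)) * (-(a * c)) ^ q = 0 := by linear_combination -hI
        have hne : -(a * c) ≠ 0 := neg_ne_zero.mpr (mul_ne_zero ha hc)
        exact (mul_ne_zero hne (pow_ne_zero _ hne)) h2
      · simp [beta, zero_pow hq0]
      · simp only [beta]
        ring
      · rw [hvL]
        show lineLstar F q = _
        simp only [Prod.mk_add_mk]
        rw [detLine_tuple]
        rw [eqnLine_congr q
          (show (1:F) * (0 + c) - 0 * (-(a ^ (q + 1) * c) + b * c) = c by ring)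
          (show (0:F) * (-(a * c) + a * c) - 0 * (0 + c) = 0 by ring)
          (show (0:F) * (-(a ^ (q + 1) * c) + b * c) - 1 * (-(a * c) + a * c) = 0 by ring)]
        exact lineLstar_eq_eqnLine q hc
      · rw [hw12]
        simp only [Prod.smul_mk, smul_eq_mul, Prod.mk_add_mk]
        rw [detLine_tuple]
        refine (eqnLine_prop q (μ := c) hc ?_ ?_ ?_).symm
        · ring
        · ring
        · linear_combination (a * c ^ 2) * hbb

end UnitaryGraphPaper
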